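/- Let A be an LB-algebra. If A has a left approximate invariant mean, then A** has a left invariant mean. -/
import Mathlib


open Filter Topology

/-- An LB-algebra: a Banach algebra with a closed generating L-cone `P` and a positive
functional `e` computing the norm on the cone. -/
structure LBAlgebra (A : Type) [NonUnitalNormedRing A] [NormedSpace ℝ A]
    [IsScalarTower ℝ A A] [SMulCommClass ℝ A A] [CompleteSpace A] where
  P : Set A
  closed : IsClosed P
  zero_mem : (0 : A) ∈ P
  add_mem : ∀ x ∈ P, ∀ y ∈ P, x + y ∈ P
  smul_mem : ∀ c : ℝ, 0 ≤ c → ∀ x ∈ P, c • x ∈ P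
  generating : ∀ a : A, ∃ x ∈ P, ∃ y ∈ P, a = x - y
  Lcone : ∀ x ∈ P, ∀ y ∈ P, ‖x + y‖ = ‖x‖ + ‖y‖
  e : A →L[ℝ] ℝ
  e_eq : ∀ v ∈ P, e v = ‖v‖

/-- The action `a · m` of `A` on the bidual `A**` induced by the (first) Arens product:
`(a · m)(f) = m (f · a)` with `(f · a)(b) = f (a * b)`. -/
noncomputable def arensAct (A : Type) [NonUnitalNormedRing A] [NormedSpace ℝ A]
    [IsScalarTower ℝ A A] [SMulCommClass ℝ A A]
    (a : A) (m : (A →L[ℝ] ℝ) →L[ℝ] ℝ) : (A →L[ℝ] ℝ) →L[ℝ] ℝ :=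
  m.comp ((ContinuousLinearMap.compL ℝ A A ℝ).flip (ContinuousLinearMap.mul ℝ A a))


set_option maxHeartbeats 1000000 in
/-- If an LB-algebra `A` has a left approximate invariant mean (a net in
`S = {x ∈ A₊ : ‖x‖ = 1}` with `‖x aᵢ - aᵢ‖ → 0` for all `x ∈ S`), then `A**` has a
left invariant mean: a positive `m` (in the weak* closure of the image of the cone)
with `‖m‖ = 1` and `a · m = e(a) m` for all `a ∈ A` (Arens action). -/
theorem approx_invariant_mean_gives_invariant_mean
    (A : Type) [NonUnitalNormedRing A] [NormedSpace ℝ A]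
    [IsScalarTower ℝ A A] [SMulCommClass ℝ A A] [CompleteSpace A]
    (LB : LBAlgebra A)
    (h : ∃ (ι : Type) (l : Filter ι) (a : ι → A), l.NeBot ∧
        (∀ i, a i ∈ LB.P ∧ ‖a i‖ = 1) ∧
        ∀ x ∈ LB.P, ‖x‖ = 1 → Tendsto (fun i => ‖x * a i - a i‖) l (𝓝 0)) :
    ∃ m : (A →L[ℝ] ℝ) →L[ℝ] ℝ,
      (∀ (F : Finset (A →L[ℝ] ℝ)) (ε : ℝ), 0 < ε →
        ∃ x ∈ LB.P, ∀ f ∈ F, |m f - f x| < ε) ∧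
      ‖m‖ = 1 ∧
      ∀ a : A, arensAct A a m = LB.e a • m := by
  obtain ⟨ι, l, a, hl, hmem, hconv⟩ := h
  obtain ⟨U, hU⟩ := Ultrafilter.exists_le (f := l)
  -- Each functional converges along the ultrafilter
  have key : ∀ f : A →L[ℝ] ℝ, ∃ L : ℝ, Tendsto (fun i => f (a i)) (↑U) (𝓝 L) := by
    intro f
    have hc : IsCompact (Set.Icc (-‖f‖) ‖f‖) := isCompact_Icc
    have hle : ↑(U.map (fun i => f (a i))) ≤ Filter.principal (Set.Icc (-‖f‖) ‖f‖) := by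
      rw [Ultrafilter.coe_map, Filter.le_principal_iff, Filter.mem_map]
      refine Filter.Eventually.mono (Filter.Eventually.of_forall (fun i => trivial)) ?_
      intro i _
      have hb : |f (a i)| ≤ ‖f‖ := by
        have := f.le_opNorm (a i)
        rw [(hmem i).2, mul_one] at this
        simpa using this
      simp only [Set.mem_Icc]
      constructor <;> [linarith [neg_abs_le (f (a i))]; linarith [le_abs_self (f (a i))]]
    obtain ⟨L, _, hL⟩ := hc.ultrafilter_le_nhds _ hle
    exact ⟨L, hL⟩
  choose L hL using key
  have hbound : ∀ f : A →L[ℝ] ℝ, ‖L f‖ ≤ 1 * ‖f‖ := by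
    intro f
    rw [one_mul, Real.norm_eq_abs]
    have habs : Tendsto (fun i => |f (a i)|) (↑U) (𝓝 |L f|) := (hL f).abs
    refine le_of_tendsto habs (Filter.Eventually.of_forall (fun i => ?_))
    have := f.le_opNorm (a i)
    rw [(hmem i).2, mul_one] at this
    simpa using this
  have hadd : ∀ f g : A →L[ℝ] ℝ, L (f + g) = L f + L g := by
    intro f g
    refine tendsto_nhds_unique (hL (f + g)) ?_
    simpa using (hL f).add (hL g)
  have hsmul : ∀ (c : ℝ) (f : A →L[ℝ] ℝ), L (c • f) = c • L f := by
    intro c f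
    refine tendsto_nhds_unique (hL (c • f)) ?_
    simpa using (hL f).const_mul c
  set mlin : (A →L[ℝ] ℝ) →ₗ[ℝ] ℝ :=
    { toFun := L, map_add' := hadd, map_smul' := hsmul } with hmlin
  set m : (A →L[ℝ] ℝ) →L[ℝ] ℝ := LinearMap.mkContinuous mlin 1 hbound with hm
  have hmf : ∀ f : A →L[ℝ] ℝ, m f = L f := fun f => rfl
  -- e has norm at most 1
  have he1 : ‖LB.e‖ ≤ 1 := by
    refine ContinuousLinearMap.opNorm_le_bound _ zero_le_one (fun v => ?_)
    obtain ⟨x, hx, y, hy, rfl⟩ := LB.generating v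
    rw [map_sub, LB.e_eq x hx, LB.e_eq y hy, one_mul, Real.norm_eq_abs]
    exact abs_norm_sub_norm_le x y
  -- m e = 1
  have hme : m LB.e = 1 := by
    rw [hmf]
    refine tendsto_nhds_unique (hL LB.e) ?_
    have : ∀ i, LB.e (a i) = 1 := fun i => by
      rw [LB.e_eq _ (hmem i).1, (hmem i).2]
    simp only [this]
    exact tendsto_const_nhds
  refine ⟨m, ?_, ?_, ?_⟩
  · -- approximation property
    intro F ε hε
    have hev : ∀ᶠ i in (↑U : Filter ι), ∀ f ∈ F, |m f - f (a i)| < ε := by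
      rw [Filter.eventually_all_finset]
      intro f hf
      have := (hL f).sub_const (L f)
      rw [sub_self] at this
      have h2 : ∀ᶠ i in (↑U : Filter ι), |f (a i) - L f| < ε := by
        have := Metric.tendsto_nhds.mp (hL f) ε hε
        refine this.mono (fun i hi => ?_)
        simpa [Real.dist_eq] using hi
      refine h2.mono (fun i hi => ?_)
      rw [hmf, abs_sub_comm]
      exact hi
    obtain ⟨i, hi⟩ := hev.exists
    exact ⟨a i, (hmem i).1, hi⟩
  · -- norm
    have hle : ‖m‖ ≤ 1 := LinearMap.mkContinuous_norm_le mlin zero_le_one hbound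
    have hge : (1 : ℝ) ≤ ‖m‖ := by
      calc (1:ℝ) = ‖m LB.e‖ := by rw [hme]; norm_num
        _ ≤ ‖m‖ * ‖LB.e‖ := m.le_opNorm _
        _ ≤ ‖m‖ * 1 := mul_le_mul_of_nonneg_left he1 (norm_nonneg m)
        _ = ‖m‖ := mul_one _
    linarith
  · -- invariance
    have hS : ∀ s ∈ LB.P, ‖s‖ = 1 → ∀ f : A →L[ℝ] ℝ,
        m (f.comp (ContinuousLinearMap.mul ℝ A s)) = m f := by
      intro s hs hns f
      rw [hmf, hmf]
      refine tendsto_nhds_unique (hL _) ?_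
      have h0 : Tendsto (fun i => ‖s * a i - a i‖) (↑U) (𝓝 0) :=
        (hconv s hs hns).mono_left hU
      have hdiff : Tendsto (fun i => f (s * a i) - f (a i)) (↑U) (𝓝 0) := by
        refine squeeze_zero_norm (a := fun i => ‖f‖ * ‖s * a i - a i‖) (fun i => ?_) ?_
        · show ‖f (s * a i) - f (a i)‖ ≤ ‖f‖ * ‖s * a i - a i‖
          rw [← map_sub]
          exact f.le_opNorm _
        · simpa using h0.const_mul ‖f‖
      have := hdiff.add (hL f)
      rw [zero_add] at this
      refine this.congr (fun i => ?_)
      simp [ContinuousLinearMap.comp_apply, ContinuousLinearMap.mul_apply']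
    have hP : ∀ x ∈ LB.P, ∀ f : A →L[ℝ] ℝ,
        m (f.comp (ContinuousLinearMap.mul ℝ A x)) = LB.e x * m f := by
      intro x hx f
      by_cases hx0 : x = 0
      · subst hx0
        simp
      · set c := ‖x‖ with hc
        have hcpos : 0 < c := norm_pos_iff.mpr hx0
        set s := c⁻¹ • x with hsdef
        have hsP : s ∈ LB.P := LB.smul_mem c⁻¹ (by positivity) x hx
        have hsn : ‖s‖ = 1 := by
          rw [hsdef, norm_smul, Real.norm_eq_abs, abs_inv, abs_of_pos hcpos,
            inv_mul_cancel₀ hcpos.ne']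
        have hxs : x = c • s := by
          rw [hsdef, smul_smul, mul_inv_cancel₀ hcpos.ne', one_smul]
        have hcomp : f.comp (ContinuousLinearMap.mul ℝ A x)
            = c • f.comp (ContinuousLinearMap.mul ℝ A s) := by
          ext v
          simp only [ContinuousLinearMap.comp_apply, ContinuousLinearMap.mul_apply',
            ContinuousLinearMap.smul_apply]
          rw [hxs, smul_mul_assoc, map_smul]
        rw [hcomp, map_smul, hS s hsP hsn f, LB.e_eq x hx, ← hc, smul_eq_mul]
    intro b
    ext f
    have hlhs : arensAct A b m f
        = m (f.comp (ContinuousLinearMap.mul ℝ A b)) := by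
      simp [arensAct, ContinuousLinearMap.comp_apply, ContinuousLinearMap.flip_apply,
        ContinuousLinearMap.compL_apply]
    obtain ⟨x, hx, y, hy, rfl⟩ := LB.generating b
    have hsub : f.comp (ContinuousLinearMap.mul ℝ A (x - y))
        = f.comp (ContinuousLinearMap.mul ℝ A x) - f.comp (ContinuousLinearMap.mul ℝ A y) := by
      ext v
      simp [ContinuousLinearMap.comp_apply, ContinuousLinearMap.mul_apply', sub_mul]
    rw [hlhs, hsub, map_sub, hP x hx f, hP y hy f, ContinuousLinearMap.smul_apply,
      map_sub, smul_eq_mul, sub_mul]
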